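/- Given a path u_0, ..., u_l with edge parameters θ_j (influence probabilities) and ψ_j = (2φ_j - 1)/2, and node opinions o_j, the OSIM score Δ^l(u_0) = Σ_{i=1}^{l} [ or_i(u_0)/2 + sc_i(u_0)/2 + o_0 · α_i(u_0)/2 ] equals the expected effective opinion spread σ^o({u_0}) = Σ_{i=1}^{l} ( Π_{j=1}^{i} θ_{j-1} ) · ( Σ_{j=1}^{i} (o_j/2) Π_{k=1}^{i-j} ψ_{i-k} + o_0 Π_{k=1}^{i} ψ_{i-k} ), where or, sc, α satisfy the OSIM recursions: or_0(u_k) = o_k, or_i(u_k) = θ_k or_{i-1}(u_{k+1}); α_0(u_k) = 1, α_i(u_k) = θ_k ψ_k α_{i-1}(u_{k+1}); sc_0(u_k) = 0, sc_i(u_k) = θ_k sc_{i-1}(u_{k+1}) + o_k α_i(u_k). -/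

import Mathlib

open Finset

/-- Auxiliary: tail product of `ψ` values. -/
def Psi (ψ : ℕ → ℝ) (n m : ℕ) : ℝ := ∏ j ∈ Finset.range (n + 1 - m), ψ (m + j)

theorem stmt4 (l : ℕ) (o θ ψ : ℕ → ℝ) (orr al sc : ℕ → ℕ → ℝ)
    (hor0 : ∀ k, orr 0 k = o k)
    (hor : ∀ i k, orr (i + 1) k = θ k * orr i (k + 1))
    (hal0 : ∀ k, al 0 k = 1)
    (hal : ∀ i k, al (i + 1) k = θ k * ψ k * al i (k + 1))
    (hsc0 : ∀ k, sc 0 k = 0)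
    (hsc : ∀ i k, sc (i + 1) k = θ k * sc i (k + 1) + o k * al (i + 1) k) :
    ∑ i ∈ Finset.Icc 1 l, (orr i 0 / 2 + sc i 0 / 2 + o 0 * al i 0 / 2)
      = ∑ i ∈ Finset.Icc 1 l, (∏ j ∈ Finset.Icc 1 i, θ (j - 1)) *
          ((∑ j ∈ Finset.Icc 1 i, (o j / 2) * ∏ k ∈ Finset.Icc 1 (i - j), ψ (i - k))
            + o 0 * ∏ k ∈ Finset.Icc 1 i, ψ (i - k)) := by
  -- closed forms
  have horr : ∀ i k, orr i k = (∏ j ∈ range i, θ (k + j)) * o (k + i) := by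
    intro i
    induction i with
    | zero => intro k; simp [hor0]
    | succ n ih =>
      intro k
      rw [hor, ih, prod_range_succ']
      have h1 : (∏ j ∈ range n, θ (k + 1 + j)) = ∏ j ∈ range n, θ (k + (j + 1)) :=
        Finset.prod_congr rfl fun j _ => by ring_nf
      rw [h1, show k + 1 + n = k + (n + 1) by ring]
      simp only [Nat.add_zero]
      ring
  have hall : ∀ i k, al i k = ∏ j ∈ range i, (θ (k + j) * ψ (k + j)) := by
    intro i
    induction i with
    | zero => intro k; simp [hal0]
    | succ n ih =>
      intro k
      rw [hal, ih, prod_range_succ']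
      have h1 : (∏ j ∈ range n, (θ (k + 1 + j) * ψ (k + 1 + j)))
          = ∏ j ∈ range n, (θ (k + (j + 1)) * ψ (k + (j + 1))) :=
        Finset.prod_congr rfl fun j _ => by ring_nf
      rw [h1]
      simp only [Nat.add_zero]
      ring
  have hscc : ∀ i k, sc i k = ∑ m ∈ range i,
      (∏ j ∈ range m, θ (k + j)) *
        (o (k + m) * ∏ j ∈ range (i - m), (θ (k + m + j) * ψ (k + m + j))) := by
    intro i
    induction i with
    | zero => intro k; simp [hsc0]
    | succ n ih =>
      intro k
      rw [hsc, ih, hall, Finset.sum_range_succ']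
      congr 1
      · rw [Finset.mul_sum]
        refine Finset.sum_congr rfl fun m hm => ?_
        rw [prod_range_succ']
        have h1 : (∏ j ∈ range m, θ (k + (j + 1))) = ∏ j ∈ range m, θ (k + 1 + j) :=
          Finset.prod_congr rfl fun j _ => by ring_nf
        have h2 : n + 1 - (m + 1) = n - m := by omega
        have h3 : (∏ j ∈ range (n - m), (θ (k + (m + 1) + j) * ψ (k + (m + 1) + j)))
            = ∏ j ∈ range (n - m), (θ (k + 1 + m + j) * ψ (k + 1 + m + j)) :=
          Finset.prod_congr rfl fun j _ => by ring_nf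
        rw [h1, h2, h3, show k + (m + 1) = k + 1 + m by ring]
        simp only [Nat.add_zero]
        ring
      · simp
  -- per-term equality
  refine Finset.sum_congr rfl fun i hi => ?_
  have hi1 : 1 ≤ i := (Finset.mem_Icc.mp hi).1
  obtain ⟨n, rfl⟩ : ∃ n, i = n + 1 := ⟨i - 1, by omega⟩
  clear hi hi1
  rw [horr, hall, hscc]
  simp only [zero_add]
  set P : ℝ := ∏ j ∈ range (n + 1), θ j with hP
  -- rewrite the sc sum terms
  have hT : ∀ m ∈ range (n + 1),
      (∏ j ∈ range m, θ j) * (o m * ∏ j ∈ range (n + 1 - m), (θ (m + j) * ψ (m + j)))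
        = P * (o m * Psi ψ n m) := by
    intro m hm
    have hm' : m ≤ n + 1 := by
      have := Finset.mem_range.mp hm; omega
    rw [Finset.prod_mul_distrib]
    have hmn : m + (n + 1 - m) = n + 1 := by omega
    have hsplit : (∏ j ∈ range m, θ j) * ∏ j ∈ range (n + 1 - m), θ (m + j) = P := by
      rw [hP, ← Finset.prod_range_add, hmn]
    rw [Psi]
    calc (∏ j ∈ range m, θ j) *
          (o m * ((∏ j ∈ range (n + 1 - m), θ (m + j)) * ∏ j ∈ range (n + 1 - m), ψ (m + j)))
        = ((∏ j ∈ range m, θ j) * ∏ j ∈ range (n + 1 - m), θ (m + j)) *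
            (o m * ∏ j ∈ range (n + 1 - m), ψ (m + j)) := by ring
      _ = P * (o m * ∏ j ∈ range (n + 1 - m), ψ (m + j)) := by rw [hsplit]
  rw [Finset.sum_congr rfl hT]
  -- rewrite θ product on RHS
  have hPrhs : (∏ j ∈ Finset.Icc 1 (n + 1), θ (j - 1)) = P := by
    rw [hP, show Finset.Icc 1 (n + 1) = Finset.Ico 1 (n + 2) by rfl,
      Finset.prod_Ico_eq_prod_range]
    refine Finset.prod_congr (by congr 1 <;> omega) fun j _ => by congr 1 <;> omega
  -- rewrite ψ products on RHS
  have hQ : ∀ m, m ≤ n + 1 →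
      (∏ k ∈ Finset.Icc 1 (n + 1 - m), ψ (n + 1 - k)) = Psi ψ n m := by
    intro m hm
    rw [show Finset.Icc 1 (n + 1 - m) = Finset.Ico 1 (n + 1 - m + 1) by rfl,
      Finset.prod_Ico_eq_prod_range]
    have h0 : n + 1 - m + 1 - 1 = n + 1 - m := by omega
    rw [h0, Psi]
    rw [← Finset.prod_range_reflect (fun j => ψ (m + j)) (n + 1 - m)]
    refine Finset.prod_congr rfl fun k hk => ?_
    have hk' := Finset.mem_range.mp hk
    congr 1
    omega
  have hQ0 : (∏ k ∈ Finset.Icc 1 (n + 1), ψ (n + 1 - k)) = Psi ψ n 0 := by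
    have := hQ 0 (by omega)
    simpa using this
  have hQsum : (∑ j ∈ Finset.Icc 1 (n + 1),
      (o j / 2) * ∏ k ∈ Finset.Icc 1 (n + 1 - j), ψ (n + 1 - k))
        = ∑ m ∈ range (n + 1), (o (1 + m) / 2) * Psi ψ n (1 + m) := by
    rw [show Finset.Icc 1 (n + 1) = Finset.Ico 1 (n + 2) by rfl,
      Finset.sum_Ico_eq_sum_range]
    refine Finset.sum_congr (by congr 1 <;> omega) fun m hm => ?_
    have hm' := Finset.mem_range.mp hm
    rw [hQ (1 + m) (by omega)]
  rw [hPrhs, hQ0, hQsum]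
  -- algebra: split off first / last terms
  have hΨ0 : (∏ j ∈ range (n + 1), (θ j * ψ j)) = P * Psi ψ n 0 := by
    rw [Finset.prod_mul_distrib, hP, Psi]; simp
  rw [hΨ0]
  rw [Finset.sum_range_succ']
  rw [Finset.sum_range_succ (fun m => (o (1 + m) / 2) * Psi ψ n (1 + m)) n]
  have hΨtop : Psi ψ n (1 + n) = 1 := by
    rw [Psi]; simp [show n + 1 - (1 + n) = 0 by omega]
  have hsums : ∀ m ∈ range n, P * (o (m + 1) * Psi ψ n (m + 1))
      = 2 * (P * ((o (1 + m) / 2) * Psi ψ n (1 + m))) := by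
    intro m hm
    rw [show 1 + m = m + 1 by omega]; ring
  rw [Finset.sum_congr rfl hsums, ← Finset.mul_sum, ← Finset.mul_sum]
  rw [hΨtop]
  rw [show (1 : ℕ) + n = n + 1 by omega]
  ring
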